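/- Let (T, ≤, L) be a tree. If (t₁,...,tₙ; t) is an operation of T and for each i ∈ {1,...,n}, (t_{i,1},...,t_{i,kᵢ}; tᵢ) is an operation of T, then the composite (t_{1,1},...,t_{1,k₁},t_{2,1},...,t_{n,kₙ}; t) is also an operation of T. -/

import Mathlib

open Classical in
lemma aux_le_one {α : Type} (p : α → Prop) :
    ∀ ls : List α, (∀ i j : Fin ls.length, p (ls.get i) → p (ls.get j) → i = j) ↔
      ls.countP (fun x => decide (p x)) ≤ 1
  | [] => by simp
  | a :: ls => by
    rw [List.countP_cons]
    by_cases hp : p a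
    · simp only [hp, decide_true, if_true]
      constructor
      · intro h
        have hz : ls.countP (fun x => decide (p x)) = 0 := by
          rw [List.countP_eq_zero]
          intro x hx
          simp only [decide_eq_true_eq]
          intro hpx
          obtain ⟨k, hk⟩ := List.get_of_mem hx
          have := h ⟨0, by simp⟩ ⟨k.1 + 1, by simpa using k.2⟩ hp (hk.symm ▸ hpx)
          simp [Fin.ext_iff] at this
        omega
      · intro h i j hi hj
        have hz : ls.countP (fun x => decide (p x)) = 0 := by omega
        rw [List.countP_eq_zero] at hz
        have key : ∀ k : Fin (a :: ls).length, p ((a :: ls).get k) → (k : ℕ) = 0 := by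
          intro k hk
          rcases k with ⟨_ | m, hm⟩
          · rfl
          · exact absurd (of_decide_eq_true (by
              exact decide_eq_true (p := p (ls.get ⟨m, by simpa using hm⟩)) hk)) (by
              simpa using hz _ (List.get_mem ls ⟨m, by simpa using hm⟩))
        exact Fin.ext (by rw [key i hi, key j hj])
    · simp only [hp, decide_false, Bool.false_eq_true, if_false, Nat.add_zero]
      rw [← aux_le_one p ls]
      constructor
      · intro h i j hi hj
        exact Fin.succ_injective _ (h i.succ j.succ hi hj)
      · intro h i j hi hj
        rcases i with ⟨_ | m, hm⟩
        · exact absurd hi hp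
        rcases j with ⟨_ | k, hk⟩
        · exact absurd hj hp
        have := h ⟨m, by simpa using hm⟩ ⟨k, by simpa using hk⟩ hi hj
        simpa [Fin.ext_iff] using this

open Classical in
lemma aux_eq_one {α : Type} (p : α → Prop) (ls : List α) :
    (∃! i : Fin ls.length, p (ls.get i)) ↔ ls.countP (fun x => decide (p x)) = 1 := by
  constructor
  · rintro ⟨i, hi, huniq⟩
    have h1 : ls.countP (fun x => decide (p x)) ≤ 1 := by
      rw [← aux_le_one]
      intro a b ha hb
      rw [huniq a ha, huniq b hb]
    have h2 : 0 < ls.countP (fun x => decide (p x)) := by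
      rw [List.countP_pos_iff]
      exact ⟨ls.get i, List.get_mem ls i, by simpa using hi⟩
    omega
  · intro h
    have h2 : 0 < ls.countP (fun x => decide (p x)) := by omega
    rw [List.countP_pos_iff] at h2
    obtain ⟨x, hx, hpx⟩ := h2
    have hpx' : p x := of_decide_eq_true hpx
    obtain ⟨i, hi⟩ := List.get_of_mem hx
    refine ⟨i, show p (ls.get i) by rw [hi]; exact hpx', fun j hj => ?_⟩
    exact (aux_le_one p ls).mpr (le_of_eq h) j i hj (show p (ls.get i) by rw [hi]; exact hpx')

/-- `(ts; t)` is an operation of the tree `(T, ≤, L)`. -/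
def IsOperation {α : Type} [PartialOrder α] (L : Set α) (ts : List α) (t : α) : Prop :=
  (∀ x ∈ ts, t ≤ x) ∧
  (∀ l ∈ L, t ≤ l → ∃! i : Fin ts.length, ts.get i ≤ l) ∧
  (∀ s : α, IsMax s → s ∉ L → t ≤ s →
    ∀ i j : Fin ts.length, ts.get i ≤ s → ts.get j ≤ s → i = j)

/-- Operations of a tree compose: substituting an operation `(us i; ts i)` into each
input of an operation `(ts; t)` yields an operation. -/
theorem stmt4 {T : Type} [Fintype T] [PartialOrder T]
    (r : T) (hroot : ∀ t, r ≤ t)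
    (hchain : ∀ e s t : T, s ≤ e → t ≤ e → s ≤ t ∨ t ≤ s)
    (L : Set T) (hL : ∀ l ∈ L, IsMax l)
    (t : T) (ts : List T) (hts : IsOperation L ts t)
    (us : Fin ts.length → List T)
    (hus : ∀ i : Fin ts.length, IsOperation L (us i) (ts.get i)) :
    IsOperation L (((List.finRange ts.length).map us).flatten) t := by
  classical
  obtain ⟨h1, h2, h3⟩ := hts
  set F := ((List.finRange ts.length).map us).flatten with hF
  have hmem : ∀ x ∈ F, ∃ i : Fin ts.length, x ∈ us i := by
    intro x hx
    rw [hF, List.mem_flatten] at hx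
    obtain ⟨l, hl, hxl⟩ := hx
    rw [List.mem_map] at hl
    obtain ⟨i, _, rfl⟩ := hl
    exact ⟨i, hxl⟩
  have hcount : ∀ p : T → Prop, F.countP (fun x => decide (p x)) =
      ∑ i : Fin ts.length, (us i).countP (fun x => decide (p x)) := by
    intro p
    rw [hF, List.countP_flatten, List.map_map, Fin.sum_univ_def]
    rfl
  have hts_le : ∀ i : Fin ts.length, t ≤ ts.get i := fun i =>
    h1 _ (ts.get_mem i)
  refine ⟨?_, ?_, ?_⟩
  · intro x hx
    obtain ⟨i, hxi⟩ := hmem x hx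
    exact le_trans (hts_le i) ((hus i).1 x hxi)
  · intro l hl htl
    refine (aux_eq_one (fun x => x ≤ l) F).mpr ?_
    rw [hcount]
    obtain ⟨i0, hi0, hiu⟩ := h2 l hl htl
    rw [Fintype.sum_eq_single i0]
    · exact (aux_eq_one _ _).mp ((hus i0).2.1 l hl hi0)
    · intro i hi
      rw [List.countP_eq_zero]
      intro u hu
      simp only [decide_eq_true_eq]
      intro hul
      exact hi (hiu i (le_trans ((hus i).1 u hu) hul))
  · intro s hs hsL hts'
    have hle : F.countP (fun x => decide (x ≤ s)) ≤ 1 := by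
      rw [hcount]
      by_cases hex : ∃ i0 : Fin ts.length, 0 < (us i0).countP (fun x => decide (x ≤ s))
      · obtain ⟨i0, hpos⟩ := hex
        rw [List.countP_pos_iff] at hpos
        obtain ⟨u, hu, hus'⟩ := hpos
        have hu' : u ≤ s := of_decide_eq_true hus'
        have hi0s : ts.get i0 ≤ s := le_trans ((hus i0).1 u hu) hu'
        rw [Fintype.sum_eq_single i0]
        · exact (aux_le_one _ _).mp ((hus i0).2.2 s hs hsL hi0s)
        · intro i hi
          by_contra hne
          have hpos' : 0 < (us i).countP (fun x => decide (x ≤ s)) := Nat.pos_of_ne_zero hne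
          rw [List.countP_pos_iff] at hpos'
          obtain ⟨v, hv, hvs⟩ := hpos'
          have his : ts.get i ≤ s := le_trans ((hus i).1 v hv) (of_decide_eq_true hvs)
          exact hi (h3 s hs hsL hts' i i0 his hi0s)
      · push_neg at hex
        have : ∀ i : Fin ts.length, (us i).countP (fun x => decide (x ≤ s)) = 0 := fun i =>
          Nat.eq_zero_of_le_zero (hex i)
        simp [this]
    exact (aux_le_one _ F).mpr hle
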